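/- Let W and W̄ be finite sets of common cardinality N and let σ be a uniformly random bijection from W to W̄. Let F be a real-valued function on the set of bijections from W to W̄ such that |F(m) − F(m')| ≤ κ for some κ > 0 whenever m' ∘ m^{−1} is a transposition. Then for every t ≥ 0, P( F(σ) − E F(σ) ≥ t ) ≤ exp( − t² / (2 N κ²) ). -/

import Mathlib

open Finset

section Aux

variable {W : Type*} {Wb : Type*} [DecidableEq W] [DecidableEq Wb]

/-- Extend an equivalence of complements to a full equivalence sending `w` to `x`. -/
def ext1 (w : W) (x : Wb) (τ : {u : W // u ≠ w} ≃ {v : Wb // v ≠ x}) : W ≃ Wb where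
  toFun u := if h : u = w then x else (τ ⟨u, h⟩).1
  invFun v := if h : v = x then w else (τ.symm ⟨v, h⟩).1
  left_inv u := by
    by_cases h : u = w
    · simp [h]
    · simp [h, (τ ⟨u, h⟩).2]
  right_inv v := by
    by_cases h : v = x
    · simp [h]
    · simp [h, (τ.symm ⟨v, h⟩).2]

lemma ext1_apply_ne (w : W) (x : Wb) (τ : {u : W // u ≠ w} ≃ {v : Wb // v ≠ x})
    (u : W) (h : u ≠ w) : ext1 w x τ u = (τ ⟨u, h⟩).1 := dif_neg h

lemma ext1_apply_w (w : W) (x : Wb) (τ : {u : W // u ≠ w} ≃ {v : Wb // v ≠ x}) :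
    ext1 w x τ w = x := dif_pos rfl

lemma ext1_symm_apply_ne (w : W) (x : Wb) (τ : {u : W // u ≠ w} ≃ {v : Wb // v ≠ x})
    (v : Wb) (h : v ≠ x) : (ext1 w x τ).symm v = (τ.symm ⟨v, h⟩).1 := dif_neg h

lemma ext1_symm_apply_x (w : W) (x : Wb) (τ : {u : W // u ≠ w} ≃ {v : Wb // v ≠ x}) :
    (ext1 w x τ).symm x = w := dif_pos rfl

/-- The fiber `{σ // σ w = x}` is equivalent to equivalences of complements. -/
def fib (w : W) (x : Wb) : {σ : W ≃ Wb // σ w = x} ≃ ({u : W // u ≠ w} ≃ {v : Wb // v ≠ x}) where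
  toFun σ := Equiv.subtypeEquiv σ.1 (fun u => not_congr
    ⟨fun hu => hu ▸ σ.2, fun hx => σ.1.injective (by rw [hx, σ.2])⟩)
  invFun τ := ⟨ext1 w x τ, ext1_apply_w w x τ⟩
  left_inv σ := by
    apply Subtype.ext; apply Equiv.ext; intro u
    by_cases h : u = w
    · simp [ext1, h, σ.2]
    · simp [ext1, h, Equiv.subtypeEquiv]
  right_inv τ := by
    apply Equiv.ext; intro u
    apply Subtype.ext
    simp [ext1, u.2, Equiv.subtypeEquiv]

lemma ext1_trans (w : W) (x : Wb) (τ τ' : {u : W // u ≠ w} ≃ {v : Wb // v ≠ x})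
    (a b : {v : Wb // v ≠ x}) (hτ : τ.symm.trans τ' = Equiv.swap a b) :
    (ext1 w x τ).symm.trans (ext1 w x τ') = Equiv.swap a.1 b.1 := by
  apply Equiv.ext; intro v
  by_cases h : v = x
  · subst h
    rw [Equiv.trans_apply, ext1_symm_apply_x, ext1_apply_w,
      Equiv.swap_apply_of_ne_of_ne (Ne.symm a.2) (Ne.symm b.2)]
  · rw [Equiv.trans_apply, ext1_symm_apply_ne w x τ v h,
      ext1_apply_ne w x τ' _ (τ.symm ⟨v, h⟩).2]
    have : (τ' (τ.symm ⟨v, h⟩)) = Equiv.swap a b ⟨v, h⟩ := by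
      rw [← hτ]; rfl
    rw [show (⟨(τ.symm ⟨v, h⟩).1, (τ.symm ⟨v, h⟩).2⟩ : {u : W // u ≠ w}) = τ.symm ⟨v, h⟩ from rfl,
      this]
    exact (Subtype.coe_injective.swap_apply a b ⟨v, h⟩).symm

end Aux

/-- Hoeffding-type bound for a mean-zero vector bounded by κ. -/
lemma sum_exp_le_card_mul {ι : Type*} [Fintype ι] {κ l : ℝ} (hκ : 0 < κ) (g : ι → ℝ)
    (hsum : ∑ i, g i = 0) (hbd : ∀ i, |g i| ≤ κ) :
    ∑ i, Real.exp (l * g i) ≤ (Fintype.card ι : ℝ) * Real.exp (l ^ 2 * κ ^ 2 / 2) := by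
  have key : ∀ i, Real.exp (l * g i) ≤
      ((κ - g i) / (2 * κ)) * Real.exp (-(l * κ)) + ((κ + g i) / (2 * κ)) * Real.exp (l * κ) := by
    intro i
    have hb1 := (abs_le.1 (hbd i)).1
    have hb2 := (abs_le.1 (hbd i)).2
    have h1 : 0 ≤ (κ - g i) / (2 * κ) := div_nonneg (by linarith) (by linarith)
    have h2 : 0 ≤ (κ + g i) / (2 * κ) := div_nonneg (by linarith) (by linarith)
    have h3 : (κ - g i) / (2 * κ) + (κ + g i) / (2 * κ) = 1 := by
      field_simp
      ring
    have hcvx := convexOn_exp.2 (Set.mem_univ (-(l * κ))) (Set.mem_univ (l * κ)) h1 h2 h3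
    have harg : ((κ - g i) / (2 * κ)) • (-(l * κ)) + ((κ + g i) / (2 * κ)) • (l * κ) = l * g i := by
      have : κ ≠ 0 := ne_of_gt hκ
      field_simp [smul_eq_mul]
      ring_nf
      rw [mul_comm κ l, mul_assoc l κ, mul_comm κ, mul_assoc, mul_assoc, mul_inv_cancel₀ this, mul_one]
    rwa [harg] at hcvx
  calc ∑ i, Real.exp (l * g i)
      ≤ ∑ i, (((κ - g i) / (2 * κ)) * Real.exp (-(l * κ))
          + ((κ + g i) / (2 * κ)) * Real.exp (l * κ)) := Finset.sum_le_sum (fun i _ => key i)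
    _ = (Fintype.card ι : ℝ) * Real.cosh (l * κ) := by
        rw [Finset.sum_add_distrib, ← Finset.sum_mul, ← Finset.sum_mul,
          ← Finset.sum_div, ← Finset.sum_div, Finset.sum_sub_distrib, Finset.sum_add_distrib,
          hsum, Finset.sum_const, Real.cosh_eq, Finset.card_univ]
        have : κ ≠ 0 := ne_of_gt hκ
        field_simp
        ring
    _ ≤ _ := by
        have h := Real.cosh_le_exp_half_sq (l * κ)
        have he : (l * κ) ^ 2 / 2 = l ^ 2 * κ ^ 2 / 2 := by ring
        rw [he] at h
        exact mul_le_mul_of_nonneg_left h (by positivity)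

section Key

universe u v

variable {W : Type u} {Wb : Type v} [DecidableEq W] [DecidableEq Wb] [Fintype W] [Fintype Wb]

/-- Decompose a sum over bijections into fibers according to the image of `w`. -/
lemma fiber_decomp (w : W) (G : (W ≃ Wb) → ℝ) :
    ∑ σ : W ≃ Wb, G σ
      = ∑ x : Wb, ∑ τ : {u : W // u ≠ w} ≃ {v : Wb // v ≠ x}, G (ext1 w x τ) := by
  rw [← Fintype.sum_fiberwise (fun σ : W ≃ Wb => σ w) G]
  refine Finset.sum_congr rfl (fun x _ => ?_)
  rw [← Equiv.sum_comp (fib w x).symm (fun σ : {σ : W ≃ Wb // σ w = x} => G σ.1)]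
  rfl

lemma fiber_sum_diff (w : W) (F : (W ≃ Wb) → ℝ) {κ : ℝ} (hκ : 0 ≤ κ)
    (hF : ∀ m m' : W ≃ Wb,
      (∃ x y : Wb, x ≠ y ∧ m.symm.trans m' = Equiv.swap x y) → |F m - F m'| ≤ κ)
    (x y : Wb) :
    |(∑ τ : {u : W // u ≠ w} ≃ {v : Wb // v ≠ x}, F (ext1 w x τ))
      - ∑ τ : {u : W // u ≠ w} ≃ {v : Wb // v ≠ y}, F (ext1 w y τ)|
      ≤ (Fintype.card ({u : W // u ≠ w} ≃ {v : Wb // v ≠ x}) : ℝ) * κ := by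
  rcases eq_or_ne x y with rfl | hxy
  · simpa using mul_nonneg (Nat.cast_nonneg _) hκ
  · let e : {σ : W ≃ Wb // σ w = x} ≃ {σ : W ≃ Wb // σ w = y} :=
      { toFun := fun σ => ⟨σ.1.trans (Equiv.swap x y), by
          simp [Equiv.trans_apply, σ.2]⟩
        invFun := fun σ => ⟨σ.1.trans (Equiv.swap x y), by
          simp [Equiv.trans_apply, σ.2]⟩
        left_inv := fun σ => by
          apply Subtype.ext; apply Equiv.ext; intro u
          simp [Equiv.trans_apply]
        right_inv := fun σ => by
          apply Subtype.ext; apply Equiv.ext; intro u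
          simp [Equiv.trans_apply] }
    have h1 : ∑ τ : {u : W // u ≠ w} ≃ {v : Wb // v ≠ y}, F (ext1 w y τ)
        = ∑ σ : {σ : W ≃ Wb // σ w = y}, F σ.1 := by
      rw [← Equiv.sum_comp (fib w y).symm (fun σ : {σ : W ≃ Wb // σ w = y} => F σ.1)]
      rfl
    have h2 : ∑ σ : {σ : W ≃ Wb // σ w = y}, F σ.1
        = ∑ σ : {σ : W ≃ Wb // σ w = x}, F (σ.1.trans (Equiv.swap x y)) := by
      rw [← Equiv.sum_comp e (fun σ : {σ : W ≃ Wb // σ w = y} => F σ.1)]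
      rfl
    have h3 : ∑ σ : {σ : W ≃ Wb // σ w = x}, F (σ.1.trans (Equiv.swap x y))
        = ∑ τ : {u : W // u ≠ w} ≃ {v : Wb // v ≠ x}, F ((ext1 w x τ).trans (Equiv.swap x y)) := by
      rw [← Equiv.sum_comp (fib w x).symm
        (fun σ : {σ : W ≃ Wb // σ w = x} => F (σ.1.trans (Equiv.swap x y)))]
      rfl
    rw [h1, h2, h3, ← Finset.sum_sub_distrib]
    calc |∑ τ : {u : W // u ≠ w} ≃ {v : Wb // v ≠ x},
            (F (ext1 w x τ) - F ((ext1 w x τ).trans (Equiv.swap x y)))|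
        ≤ ∑ τ : {u : W // u ≠ w} ≃ {v : Wb // v ≠ x},
            |F (ext1 w x τ) - F ((ext1 w x τ).trans (Equiv.swap x y))| :=
          Finset.abs_sum_le_sum_abs _ _
      _ ≤ ∑ _τ : {u : W // u ≠ w} ≃ {v : Wb // v ≠ x}, κ := by
          refine Finset.sum_le_sum (fun τ _ => ?_)
          refine hF _ _ ⟨x, y, hxy, ?_⟩
          apply Equiv.ext; intro v
          simp [Equiv.trans_apply]
      _ = _ := by
          rw [Finset.sum_const, Finset.card_univ, nsmul_eq_mul]

lemma key_mgf (n : ℕ) : ∀ (W : Type u) (Wb : Type v) [Fintype W] [Fintype Wb]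
    [DecidableEq W] [DecidableEq Wb],
    Fintype.card W = n → Fintype.card Wb = n → ∀ (κ l : ℝ), 0 < κ →
    ∀ F : (W ≃ Wb) → ℝ,
    (∀ m m' : W ≃ Wb,
      (∃ x y : Wb, x ≠ y ∧ m.symm.trans m' = Equiv.swap x y) → |F m - F m'| ≤ κ) →
    ∑ σ : W ≃ Wb, Real.exp (l * (F σ - (∑ σ' : W ≃ Wb, F σ') / (Fintype.card (W ≃ Wb) : ℝ)))
      ≤ (Fintype.card (W ≃ Wb) : ℝ) * Real.exp (n * l ^ 2 * κ ^ 2 / 2) := by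
  induction n with
  | zero =>
    intro W Wb _ _ _ _ hW hWb κ l hκ F hF
    have hc : Fintype.card (W ≃ Wb) = 1 := by
      rw [Fintype.card_equiv (Fintype.equivOfCardEq (hW.trans hWb.symm)), hW]
      rfl
    obtain ⟨e, he⟩ := Fintype.card_eq_one_iff.mp hc
    rw [Fintype.sum_eq_single e (fun b hb => absurd (he b) hb),
        Fintype.sum_eq_single (f := F) e (fun b hb => absurd (he b) hb), hc]
    simp
  | succ n IH =>
    intro W Wb _ _ _ _ hW hWb κ l hκ F hF
    obtain ⟨w⟩ : Nonempty W := Fintype.card_pos_iff.mp (by omega)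
    have hcW' : Fintype.card {u : W // u ≠ w} = n := by
      have h := Fintype.card_subtype_compl (fun u : W => u = w)
      rw [Fintype.card_subtype_eq, hW] at h
      simpa using h
    have hcWb' : ∀ x : Wb, Fintype.card {v : Wb // v ≠ x} = n := by
      intro x
      have h := Fintype.card_subtype_compl (fun v : Wb => v = x)
      rw [Fintype.card_subtype_eq, hWb] at h
      simpa using h
    have hM : Fintype.card (W ≃ Wb) = (n+1).factorial := by
      rw [Fintype.card_equiv (Fintype.equivOfCardEq (hW.trans hWb.symm)), hW]
    have hM' : ∀ x : Wb, Fintype.card ({u : W // u ≠ w} ≃ {v : Wb // v ≠ x}) = n.factorial := by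
      intro x
      rw [Fintype.card_equiv (Fintype.equivOfCardEq (by rw [hcW', hcWb' x])), hcW']
    have hfacpos : (0:ℝ) < (n.factorial : ℝ) := by
      exact_mod_cast Nat.factorial_pos n
    set μ : ℝ := (∑ σ' : W ≃ Wb, F σ') / (Fintype.card (W ≃ Wb) : ℝ) with hμdef
    set μx : Wb → ℝ := fun x =>
      (∑ τ : {u : W // u ≠ w} ≃ {v : Wb // v ≠ x}, F (ext1 w x τ)) / (n.factorial : ℝ) with hμx
    -- total mean relation
    have hsum_mu : ∑ x : Wb, μx x = (n+1) * μ := by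
      have h1 : ∑ σ' : W ≃ Wb, F σ' = ∑ x : Wb, (μx x * (n.factorial : ℝ)) := by
        rw [fiber_decomp w F]
        refine Finset.sum_congr rfl (fun x _ => ?_)
        simp only [hμx]
        field_simp
      have hfac : ((n+1).factorial : ℝ) = (n+1) * (n.factorial : ℝ) := by
        push_cast [Nat.factorial_succ]
        ring
      rw [hμdef, hM, h1, ← Finset.sum_mul, hfac]
      field_simp
    -- pairwise bound
    have hpair : ∀ x y : Wb, |μx x - μx y| ≤ κ := by
      intro x y
      have h := fiber_sum_diff w F (le_of_lt hκ) hF x y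
      rw [hM' x] at h
      simp only [hμx]
      rw [div_sub_div_same, abs_div, abs_of_pos hfacpos, div_le_iff₀ hfacpos]
      linarith [h]
    -- centered bound
    have hcent : ∀ x : Wb, |μx x - μ| ≤ κ := by
      intro x
      have hrw : μx x - μ = (∑ y : Wb, (μx x - μx y)) / ((n:ℝ)+1) := by
        rw [Finset.sum_sub_distrib, hsum_mu, Finset.sum_const, Finset.card_univ, hWb,
          nsmul_eq_mul]
        push_cast
        field_simp
      rw [hrw, abs_div, abs_of_pos (by positivity : (0:ℝ) < (n:ℝ)+1), div_le_iff₀ (by positivity)]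
      calc |∑ y : Wb, (μx x - μx y)| ≤ ∑ y : Wb, |μx x - μx y| := Finset.abs_sum_le_sum_abs _ _
        _ ≤ ∑ _y : Wb, κ := Finset.sum_le_sum (fun y _ => hpair x y)
        _ = κ * ((n:ℝ)+1) := by
            rw [Finset.sum_const, Finset.card_univ, hWb, nsmul_eq_mul]
            push_cast
            ring
    have hzero : ∑ x : Wb, (μx x - μ) = 0 := by
      rw [Finset.sum_sub_distrib, hsum_mu, Finset.sum_const, Finset.card_univ, hWb,
        nsmul_eq_mul]
      push_cast
      ring
    -- per-fiber mgf bound from IH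
    have hstep : ∀ x : Wb,
        ∑ τ : {u : W // u ≠ w} ≃ {v : Wb // v ≠ x}, Real.exp (l * (F (ext1 w x τ) - μ))
        ≤ Real.exp (l * (μx x - μ)) * ((n.factorial : ℝ) * Real.exp (n * l ^ 2 * κ ^ 2 / 2)) := by
      intro x
      have hLip : ∀ m m' : {u : W // u ≠ w} ≃ {v : Wb // v ≠ x},
          (∃ a b : {v : Wb // v ≠ x}, a ≠ b ∧ m.symm.trans m' = Equiv.swap a b) →
          |F (ext1 w x m) - F (ext1 w x m')| ≤ κ := by
        rintro τ τ' ⟨a, b, hab, heq⟩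
        exact hF _ _ ⟨a.1, b.1, fun h => hab (Subtype.ext h), ext1_trans w x τ τ' a b heq⟩
      have hIH := IH {u : W // u ≠ w} {v : Wb // v ≠ x} hcW' (hcWb' x) κ l hκ
        (fun τ => F (ext1 w x τ)) hLip
      rw [hM' x] at hIH
      calc ∑ τ : {u : W // u ≠ w} ≃ {v : Wb // v ≠ x}, Real.exp (l * (F (ext1 w x τ) - μ))
          = ∑ τ : {u : W // u ≠ w} ≃ {v : Wb // v ≠ x},
              Real.exp (l * (μx x - μ)) * Real.exp (l * (F (ext1 w x τ) - μx x)) := by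
            refine Finset.sum_congr rfl (fun τ _ => ?_)
            rw [← Real.exp_add]
            congr 1
            ring
        _ = Real.exp (l * (μx x - μ)) *
              ∑ τ : {u : W // u ≠ w} ≃ {v : Wb // v ≠ x},
                Real.exp (l * (F (ext1 w x τ) - μx x)) := by rw [Finset.mul_sum]
        _ ≤ _ := by
            refine mul_le_mul_of_nonneg_left ?_ (le_of_lt (Real.exp_pos _))
            simpa [hμx] using hIH
    calc ∑ σ : W ≃ Wb, Real.exp (l * (F σ - μ))
        = ∑ x : Wb, ∑ τ : {u : W // u ≠ w} ≃ {v : Wb // v ≠ x},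
            Real.exp (l * (F (ext1 w x τ) - μ)) :=
          fiber_decomp w _
      _ ≤ ∑ x : Wb, Real.exp (l * (μx x - μ)) *
            ((n.factorial : ℝ) * Real.exp (n * l ^ 2 * κ ^ 2 / 2)) :=
          Finset.sum_le_sum (fun x _ => hstep x)
      _ = (∑ x : Wb, Real.exp (l * (μx x - μ))) *
            ((n.factorial : ℝ) * Real.exp (n * l ^ 2 * κ ^ 2 / 2)) := by
          rw [← Finset.sum_mul]
      _ ≤ ((Fintype.card Wb : ℝ) * Real.exp (l ^ 2 * κ ^ 2 / 2)) *
            ((n.factorial : ℝ) * Real.exp (n * l ^ 2 * κ ^ 2 / 2)) := by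
          refine mul_le_mul_of_nonneg_right ?_ (by positivity)
          exact sum_exp_le_card_mul hκ _ hzero hcent
      _ = (Fintype.card (W ≃ Wb) : ℝ) * Real.exp ((n+1 : ℕ) * l ^ 2 * κ ^ 2 / 2) := by
          rw [hWb, hM]
          have hee : Real.exp (l ^ 2 * κ ^ 2 / 2) * Real.exp ((n:ℝ) * l ^ 2 * κ ^ 2 / 2)
              = Real.exp (((n:ℝ) + 1) * l ^ 2 * κ ^ 2 / 2) := by
            rw [← Real.exp_add]; congr 1; ring
          push_cast [Nat.factorial_succ]
          linear_combination ((n:ℝ) + 1) * (n.factorial : ℝ) * hee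

end Key

/-- Let `W`, `W̄` be finite sets of common cardinality `N` and `σ` a
uniformly random bijection `W → W̄`.  If `F` on bijections satisfies
`|F(m) − F(m')| ≤ κ` whenever `m' ∘ m⁻¹` is a transposition, then for `t ≥ 0`,
`P(F(σ) − E F(σ) ≥ t) ≤ exp(−t²/(2Nκ²))`. -/
theorem stmt_11 (W Wb : Type*) [Finite W] [Finite Wb] [DecidableEq Wb] (N : ℕ)
    (hW : Nat.card W = N) (hWb : Nat.card Wb = N) (κ : ℝ) (hκ : 0 < κ)
    (F : (W ≃ Wb) → ℝ)
    (hF : ∀ m m' : W ≃ Wb,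
      (∃ x y : Wb, x ≠ y ∧ m.symm.trans m' = Equiv.swap x y) → |F m - F m'| ≤ κ)
    (t : ℝ) (ht : 0 ≤ t) :
    (Nat.card {σ : W ≃ Wb //
        t ≤ F σ - (∑' σ' : W ≃ Wb, F σ') / (Nat.card (W ≃ Wb) : ℝ)} : ℝ) /
      (Nat.card (W ≃ Wb) : ℝ) ≤
    Real.exp (-(t ^ 2) / (2 * N * κ ^ 2)) := by
  classical
  letI := Fintype.ofFinite W
  letI := Fintype.ofFinite Wb
  rw [Nat.card_eq_fintype_card] at hW hWb
  simp only [Nat.card_eq_fintype_card, tsum_fintype]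
  set μ : ℝ := (∑ σ' : W ≃ Wb, F σ') / (Fintype.card (W ≃ Wb) : ℝ) with hμ
  have hMpos : 0 < Fintype.card (W ≃ Wb) :=
    Fintype.card_pos_iff.mpr ⟨Fintype.equivOfCardEq (hW.trans hWb.symm)⟩
  have hMposR : (0:ℝ) < (Fintype.card (W ≃ Wb) : ℝ) := by exact_mod_cast hMpos
  rcases Nat.eq_zero_or_pos N with rfl | hN
  · simp only [Nat.cast_zero, mul_zero, zero_mul, div_zero, Real.exp_zero]
    rw [div_le_one hMposR]
    exact_mod_cast Fintype.card_subtype_le _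
  · have hNR : (0:ℝ) < (N:ℝ) := by exact_mod_cast hN
    set l : ℝ := t / (N * κ ^ 2) with hl
    have hl0 : 0 ≤ l := div_nonneg ht (by positivity)
    have hkey := key_mgf N W Wb hW hWb κ l hκ F hF
    have hcount : (Fintype.card {σ : W ≃ Wb // t ≤ F σ - μ} : ℝ) * Real.exp (l * t)
        ≤ ∑ σ : W ≃ Wb, Real.exp (l * (F σ - μ)) := by
      have h1 : (Fintype.card {σ : W ≃ Wb // t ≤ F σ - μ} : ℝ) * Real.exp (l * t)
          = ∑ _σ : {σ : W ≃ Wb // t ≤ F σ - μ}, Real.exp (l * t) := by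
        rw [Finset.sum_const, Finset.card_univ, nsmul_eq_mul]
      rw [h1]
      have h2 : ∑ _σ : {σ : W ≃ Wb // t ≤ F σ - μ}, Real.exp (l * t)
          ≤ ∑ σ : {σ : W ≃ Wb // t ≤ F σ - μ}, Real.exp (l * (F σ.1 - μ)) :=
        Finset.sum_le_sum (fun σ _ => Real.exp_le_exp.mpr (mul_le_mul_of_nonneg_left σ.2 hl0))
      refine h2.trans ?_
      rw [← Finset.sum_subtype (Finset.univ.filter (fun σ : W ≃ Wb => t ≤ F σ - μ))
        (by simp) (fun σ => Real.exp (l * (F σ - μ)))]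
      exact Finset.sum_le_sum_of_subset_of_nonneg (Finset.filter_subset _ _)
        (fun σ _ _ => (Real.exp_pos _).le)
    have hexp : Real.exp ((N:ℝ) * l ^ 2 * κ ^ 2 / 2)
        = Real.exp (-(t ^ 2) / (2 * (N:ℝ) * κ ^ 2)) * Real.exp (l * t) := by
      rw [← Real.exp_add]
      congr 1
      rw [hl]
      have hκ' : κ ≠ 0 := ne_of_gt hκ
      field_simp
      ring
    rw [div_le_iff₀ hMposR]
    have hcomb := hcount.trans hkey
    rw [hexp] at hcomb
    nlinarith [hcomb, Real.exp_pos (l * t),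
      mul_pos hMposR (Real.exp_pos (-(t ^ 2) / (2 * (N:ℝ) * κ ^ 2)))]
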